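/- Let g be a polynomial of degree n ≥ 1 with complex coefficients, let K be the convex hull of its zeros, and let α be a nonzero complex number. Then every zero of the polynomial h(z) = g'(z) − α·g(z) lies in the set K + [0,n]·α⁻¹, i.e., every zero z of h can be written as z = w + t·α⁻¹ with w ∈ K and t a real number with 0 ≤ t ≤ n. -/

import Mathlib

open Polynomial

/-- Log derivative of a product of linear factors, evaluated at a non-root. -/
lemma takagi_aux_logderiv (M : Multiset ℂ) (z : ℂ) (h : ∀ r ∈ M, z - r ≠ 0) :
    Polynomial.eval z (Polynomial.derivative (M.map (fun r => X - C r)).prod)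
      = Polynomial.eval z (M.map (fun r => X - C r)).prod
        * (M.map (fun r => (z - r)⁻¹)).sum := by
  induction M using Multiset.induction_on with
  | empty => simp
  | cons r M ih =>
    have hr : z - r ≠ 0 := h r (Multiset.mem_cons_self r M)
    have hM : ∀ s ∈ M, z - s ≠ 0 := fun s hs => h s (Multiset.mem_cons_of_mem hs)
    simp only [Multiset.map_cons, Multiset.prod_cons, Multiset.sum_cons, derivative_mul,
      derivative_X_sub_C, one_mul, eval_add, eval_mul, eval_sub, eval_X, eval_C, ih hM]
    field_simp

/-- Takagi's degree-1 proposition: every zero of g' - α g lies in K + [0,n]·α⁻¹. -/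
theorem takagi_degree_one (g : Polynomial ℂ) (n : ℕ) (hn : 1 ≤ n)
    (hdeg : g.natDegree = n) (α : ℂ) (hα : α ≠ 0) (z : ℂ)
    (hz : (Polynomial.derivative g - Polynomial.C α * g).eval z = 0) :
    ∃ w ∈ convexHull ℝ (g.roots.toFinset : Set ℂ),
      ∃ t : ℝ, 0 ≤ t ∧ t ≤ n ∧ z = w + (t : ℂ) * α⁻¹ := by
  classical
  have hg0 : g ≠ 0 := by
    intro h; rw [h, natDegree_zero] at hdeg; omega
  by_cases hgz : g.eval z = 0
  · have hzmem : z ∈ (g.roots.toFinset : Set ℂ) := by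
      simp only [Finset.coe_sort_coe, Finset.mem_coe, Multiset.mem_toFinset]
      exact (mem_roots hg0).mpr hgz
    exact ⟨z, subset_convexHull ℝ _ hzmem, 0, le_refl _, by positivity, by simp⟩
  · -- z is not a root; α = Σ 1/(z - r)
    set M := g.roots with hM
    have hcard : Multiset.card M = n := by
      rw [hM, ← hdeg]
      exact splits_iff_card_roots.mp (IsAlgClosed.splits g)
    have hzr : ∀ r ∈ M, z - r ≠ 0 := by
      intro r hr hzr0
      apply hgz
      have : z = r := by linear_combination hzr0
      rw [this]
      exact (mem_roots hg0).mp hr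
    -- the product representation
    have hprod : g = C g.leadingCoeff * (M.map (fun r => X - C r)).prod :=
      (IsAlgClosed.splits g).eq_prod_roots
    have hαsum : α = (M.map (fun r => (z - r)⁻¹)).sum := by
      have h1 : (Polynomial.derivative g).eval z = α * g.eval z := by
        have h0 := hz
        simp only [eval_sub, eval_mul, eval_C] at h0
        linear_combination h0
      have h2 : (Polynomial.derivative g).eval z
          = g.eval z * (M.map (fun r => (z - r)⁻¹)).sum := by
        conv_lhs => rw [hprod]
        conv_rhs => rw [hprod]
        rw [derivative_mul, derivative_C, zero_mul, zero_add, eval_mul, eval_C,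
          takagi_aux_logderiv M z hzr, eval_mul, eval_C]
        ring
      have h3 : g.eval z * (α - (M.map (fun r => (z - r)⁻¹)).sum) = 0 := by
        linear_combination h2 - h1
      rcases mul_eq_zero.mp h3 with h | h
      · exact absurd h hgz
      · exact sub_eq_zero.mp h
    -- weights
    set W : ℂ → ℝ := fun r => (M.count r : ℝ) * ‖(z - r)⁻¹‖ ^ 2 with hW
    set t := M.toFinset with ht
    have hW0 : ∀ r ∈ t, 0 ≤ W r := fun r _ => by positivity
    have hS : 0 < ∑ r ∈ t, W r := by
      obtain ⟨r, hr⟩ : ∃ r, r ∈ M := by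
        rcases Multiset.card_pos_iff_exists_mem.mp (by omega : 0 < Multiset.card M) with ⟨r, hr⟩
        exact ⟨r, hr⟩
      refine Finset.sum_pos' hW0 ⟨r, Multiset.mem_toFinset.mpr hr, ?_⟩
      have h1 : 1 ≤ M.count r := Multiset.one_le_count_iff_mem.mpr hr
      have h2 : (z - r)⁻¹ ≠ 0 := inv_ne_zero (hzr r hr)
      have hc : (0:ℝ) < M.count r := by exact_mod_cast h1
      have hb : 0 < ‖(z - r)⁻¹‖ := norm_pos_iff.mpr h2
      simp only [hW]
      exact mul_pos hc (pow_pos hb 2)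
    set S : ℝ := ∑ r ∈ t, W r with hSdef
    refine ⟨t.centerMass W id, Finset.centerMass_mem_convexHull t hW0 hS
      (fun r hr => Finset.mem_coe.mpr hr), ‖α‖ ^ 2 / S, by positivity, ?_, ?_⟩
    · -- ‖α‖^2 / S ≤ n
      rw [div_le_iff₀ hS]
      have hsum : ∑ r ∈ t, (M.count r : ℝ) = (n : ℝ) := by
        rw [← hcard]; exact_mod_cast (Multiset.toFinset_sum_count_eq M)
      have hnorm : ‖α‖ ≤ ∑ r ∈ t, (M.count r : ℝ) * ‖(z - r)⁻¹‖ := by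
        rw [hαsum]
        calc ‖(M.map (fun r => (z - r)⁻¹)).sum‖
            ≤ ((M.map (fun r => (z - r)⁻¹)).map norm).sum := norm_multiset_sum_le _
          _ = (M.map (fun r => ‖(z - r)⁻¹‖)).sum := by rw [Multiset.map_map]; rfl
          _ = ∑ r ∈ t, M.count r • ‖(z - r)⁻¹‖ := Finset.sum_multiset_map_count M _
          _ = ∑ r ∈ t, (M.count r : ℝ) * ‖(z - r)⁻¹‖ := by
              simp [nsmul_eq_mul]
      have hCS : (∑ r ∈ t, (M.count r : ℝ) * ‖(z - r)⁻¹‖) ^ 2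
          ≤ (∑ r ∈ t, (M.count r : ℝ)) * S := by
        have := Finset.sum_mul_sq_le_sq_mul_sq t (fun r => Real.sqrt (M.count r))
          (fun r => Real.sqrt (M.count r) * ‖(z - r)⁻¹‖)
        have e1 : ∀ r : ℂ, Real.sqrt (M.count r) * (Real.sqrt (M.count r) * ‖(z - r)⁻¹‖)
            = (M.count r : ℝ) * ‖(z - r)⁻¹‖ := by
          intro r
          rw [← mul_assoc, Real.mul_self_sqrt (by positivity)]
        have e2 : ∀ r : ℂ, Real.sqrt (M.count r) ^ 2 = (M.count r : ℝ) := fun r =>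
          Real.sq_sqrt (by positivity)
        have e3 : ∀ r : ℂ, (Real.sqrt (M.count r) * ‖(z - r)⁻¹‖) ^ 2 = W r := by
          intro r
          rw [mul_pow, e2 r, hW]
        simp only [e1, e2, e3] at this
        exact this
      calc ‖α‖ ^ 2 ≤ (∑ r ∈ t, (M.count r : ℝ) * ‖(z - r)⁻¹‖) ^ 2 := by
            apply sq_le_sq' _ hnorm
            have : 0 ≤ ∑ r ∈ t, (M.count r : ℝ) * ‖(z - r)⁻¹‖ := by positivity
            linarith [norm_nonneg α]
        _ ≤ (∑ r ∈ t, (M.count r : ℝ)) * S := hCS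
        _ = (n : ℝ) * S := by rw [hsum]
    · -- z = w + t α⁻¹
      have hSne : (S : ℂ) ≠ 0 := by exact_mod_cast hS.ne'
      have hαconj : starRingEnd ℂ α = ∑ r ∈ t, (M.count r : ℂ) * starRingEnd ℂ ((z - r)⁻¹) := by
        rw [hαsum, Finset.sum_multiset_map_count M (fun r => (z - r)⁻¹), map_sum]
        refine Finset.sum_congr rfl fun r _ => ?_
        rw [nsmul_eq_mul, map_mul, map_natCast]
      have key1 : ∑ r ∈ t, (W r : ℂ) * (z - r) = starRingEnd ℂ α := by
        rw [hαconj]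
        refine Finset.sum_congr rfl fun r hr => ?_
        have hzr' : z - r ≠ 0 := hzr r (Multiset.mem_toFinset.mp hr)
        have hWc : (W r : ℂ) = (M.count r : ℂ) * ((z - r)⁻¹ * starRingEnd ℂ ((z - r)⁻¹)) := by
          simp only [hW]
          push_cast
          rw [Complex.mul_conj']
        rw [hWc, mul_assoc]
        congr 1
        rw [mul_comm ((z - r)⁻¹), mul_assoc, inv_mul_cancel₀ hzr', mul_one]
      have h4 : (S : ℂ) = ∑ r ∈ t, (W r : ℂ) := by
        rw [hSdef]; push_cast; rfl
      have hw : (t.centerMass W id : ℂ) = (S : ℂ)⁻¹ * ∑ r ∈ t, (W r : ℂ) * r := by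
        rw [Finset.centerMass, ← hSdef, Complex.real_smul]
        push_cast
        congr 1
      have hzw : z - t.centerMass W id = starRingEnd ℂ α / (S : ℂ) := by
        rw [hw, eq_div_iff hSne]
        calc (z - (S : ℂ)⁻¹ * ∑ r ∈ t, (W r : ℂ) * r) * (S : ℂ)
            = (S : ℂ) * z - ∑ r ∈ t, (W r : ℂ) * r := by
              field_simp
          _ = ∑ r ∈ t, (W r : ℂ) * (z - r) := by
              rw [h4, Finset.sum_mul, ← Finset.sum_sub_distrib]
              exact Finset.sum_congr rfl fun r _ => by ring
          _ = starRingEnd ℂ α := key1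
      have htα : ((‖α‖ ^ 2 / S : ℝ) : ℂ) * α⁻¹ = starRingEnd ℂ α / (S : ℂ) := by
        push_cast
        rw [← Complex.mul_conj']
        field_simp
      rw [htα, ← hzw]
      ring
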